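/- Let p, p', q' be positive integers with p odd, p' ≡ q' (mod 2), p'q' ≤ p and (p', q') ≠ (p, 1). Then for every real number m > 0, h^m_{p,1} ≠ h^m_{p',q'}. (The vanishing curve C_{p,1} intersects no other vanishing curve of level ≤ p/2.) -/
import Mathlib


/-- `h^m_{p,q} = (((m+2)p − mq)² − 4) / (8m(m+2))`. -/
noncomputable def hPQ (m : ℝ) (p q : ℤ) : ℝ :=
  (((m + 2) * (p : ℝ) - m * (q : ℝ)) ^ 2 - 4) / (8 * m * (m + 2))

/-- The vanishing curve `C_{p,1}` intersects no other vanishing curve of level `≤ p/2`: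
if `p` is odd, `p' ≡ q' (mod 2)`, `p'q' ≤ p` and `(p',q') ≠ (p,1)`, then
`h^m_{p,1} ≠ h^m_{p',q'}` for every `m > 0`. -/
theorem curve_p1_no_intersection (p p' q' : ℤ) (hp : 1 ≤ p) (hp' : 1 ≤ p') (hq' : 1 ≤ q')
    (hodd : Odd p) (hpar : p' % 2 = q' % 2) (hlev : p' * q' ≤ p) (hne : (p', q') ≠ (p, 1)) :
    ∀ m : ℝ, 0 < m → hPQ m p 1 ≠ hPQ m p' q' := by
  intro m hm heq
  have hm2 : (0:ℝ) < m + 2 := by linarith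
  have hden : (8 * m * (m + 2) : ℝ) ≠ 0 := by positivity
  unfold hPQ at heq
  rw [div_eq_div_iff hden hden] at heq
  have hsq : ((m + 2) * (p : ℝ) - m * 1) ^ 2 = ((m + 2) * (p' : ℝ) - m * (q' : ℝ)) ^ 2 := by
    have h8 := mul_right_cancel₀ hden heq
    push_cast at h8 ⊢
    linarith [h8]
  have hpR : (1:ℝ) ≤ (p:ℝ) := by exact_mod_cast hp
  have hpR' : (1:ℝ) ≤ (p':ℝ) := by exact_mod_cast hp'
  have hqR' : (1:ℝ) ≤ (q':ℝ) := by exact_mod_cast hq'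
  have hlevR : (p':ℝ) * (q':ℝ) ≤ (p:ℝ) := by exact_mod_cast hlev
  have hcases : ((m + 2) * (p : ℝ) - m * 1) = ((m + 2) * (p' : ℝ) - m * (q' : ℝ)) ∨
      ((m + 2) * (p : ℝ) - m * 1) = -((m + 2) * (p' : ℝ) - m * (q' : ℝ)) := by
    have := sq_eq_sq_iff_eq_or_eq_neg.mp hsq
    exact this
  rcases hcases with h | h
  · -- case A = B
    rcases eq_or_ne p' p with rfl | hpp
    · -- then q' = 1 forced, contradicting hne
      have hq1 : (q':ℝ) = 1 := by nlinarith
      have : q' = 1 := by exact_mod_cast hq1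
      exact hne (by simp [this])
    · rcases lt_or_gt_of_ne hpp with hlt | hgt
      · have : (p':ℝ) ≤ (p:ℝ) - 1 := by
          have h : p' ≤ p - 1 := by omega
          have : (p':ℝ) ≤ ((p:ℝ) - 1 : ℝ) := by exact_mod_cast h
          linarith
        nlinarith
      · have : (p:ℝ) + 1 ≤ (p':ℝ) := by
          have : p + 1 ≤ p' := by omega
          exact_mod_cast this
        nlinarith
  · -- case A = -B : (m+2)(p+p') = m(1+q')
    have hq'big : (p:ℝ) + (p':ℝ) - 1 < (q':ℝ) := by nlinarith
    nlinarith [mul_le_mul_of_nonneg_left (show (1:ℝ) ≤ (p:ℝ) + (p':ℝ) - 1 + 1 by linarith)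
      (show (0:ℝ) ≤ (p':ℝ) by linarith)]
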